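/- The Jacobian matrix of the vector field F(x,y) = (-(y-1/2)/(x^2+(y-1/2)^2) + (y+1/2)/(x^2+(y+1/2)^2) - 1, x/(x^2+(y-1/2)^2) - x/(x^2+(y+1/2)^2)) evaluated at the point (√3/2, 0) equals the diagonal matrix diag(-√3, √3), and at (-√3/2, 0) it equals diag(√3, -√3). -/

import Mathlib

open ContinuousLinearMap

lemma key (x s : ℝ) (hx2 : x ^ 2 = 3/4) (hs : s = 2 * x) :
    HasFDerivAt (fun p : ℝ × ℝ =>
      (-(p.2 - 1/2) / (p.1 ^ 2 + (p.2 - 1/2) ^ 2)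
          + (p.2 + 1/2) / (p.1 ^ 2 + (p.2 + 1/2) ^ 2) - 1,
        p.1 / (p.1 ^ 2 + (p.2 - 1/2) ^ 2) - p.1 / (p.1 ^ 2 + (p.2 + 1/2) ^ 2)))
      (((-s) • (fst ℝ ℝ ℝ)).prod (s • (snd ℝ ℝ ℝ))) (x, 0) := by
  have hfst : HasFDerivAt (fun p : ℝ × ℝ => p.1) (fst ℝ ℝ ℝ) (x, 0) := hasFDerivAt_fst
  have hsnd : HasFDerivAt (fun p : ℝ × ℝ => p.2) (snd ℝ ℝ ℝ) (x, 0) := hasFDerivAt_snd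
  have ha : HasFDerivAt (fun p : ℝ × ℝ => p.2 - 1/2) (snd ℝ ℝ ℝ) (x, 0) :=
    hsnd.sub_const _
  have hb : HasFDerivAt (fun p : ℝ × ℝ => p.2 + 1/2) (snd ℝ ℝ ℝ) (x, 0) :=
    hsnd.add_const _
  have hd1 := (hfst.mul hfst).add (ha.mul ha)
  have hd2 := (hfst.mul hfst).add (hb.mul hb)
  have hne1 : (x : ℝ) * x + (((x, 0) : ℝ × ℝ).2 - 1/2) * (((x, 0) : ℝ × ℝ).2 - 1/2) ≠ 0 := by
    have : x * x = 3/4 := by nlinarith [hx2]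
    norm_num [this]
  have hne2 : (x : ℝ) * x + (((x, 0) : ℝ × ℝ).2 + 1/2) * (((x, 0) : ℝ × ℝ).2 + 1/2) ≠ 0 := by
    have : x * x = 3/4 := by nlinarith [hx2]
    norm_num [this]
  have hi1 := (hasFDerivAt_inv hne1).comp (x, 0) hd1
  have hi2 := (hasFDerivAt_inv hne2).comp (x, 0) hd2
  have hq1 := (ha.neg).mul hi1
  have hq2 := hb.mul hi2
  have hF1 := (hq1.add hq2).sub_const (1 : ℝ)
  have hF2 := (hfst.mul hi1).sub (hfst.mul hi2)
  have h := HasFDerivAt.prodMk hF1 hF2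
  refine HasFDerivAt.congr_fderiv (h.congr_of_eventuallyEq ?_) ?_
  · filter_upwards with p
    simp only [Function.comp_def]
    have h1 : p.1 ^ 2 + (p.2 - 1/2) ^ 2 = p.1 * p.1 + (p.2 - 1/2) * (p.2 - 1/2) := by ring
    have h2 : p.1 ^ 2 + (p.2 + 1/2) ^ 2 = p.1 * p.1 + (p.2 + 1/2) * (p.2 + 1/2) := by ring
    rw [h1, h2]
    simp [div_eq_mul_inv]
    ring
  · subst hs
    refine ContinuousLinearMap.ext fun v => Prod.ext ?_ ?_ <;>
      simp [ContinuousLinearMap.prod_apply, Function.comp_def, hx2,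
        show x * x = 3/4 from by nlinarith [hx2]] <;> ring

theorem stmt_6 :
    (let F : ℝ × ℝ → ℝ × ℝ := fun p =>
      (-(p.2 - 1/2) / (p.1 ^ 2 + (p.2 - 1/2) ^ 2)
          + (p.2 + 1/2) / (p.1 ^ 2 + (p.2 + 1/2) ^ 2) - 1,
        p.1 / (p.1 ^ 2 + (p.2 - 1/2) ^ 2) - p.1 / (p.1 ^ 2 + (p.2 + 1/2) ^ 2));
    HasFDerivAt F
      (((-Real.sqrt 3) • (ContinuousLinearMap.fst ℝ ℝ ℝ)).prod
        ((Real.sqrt 3) • (ContinuousLinearMap.snd ℝ ℝ ℝ)))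
      (Real.sqrt 3 / 2, 0) ∧
    HasFDerivAt F
      (((Real.sqrt 3) • (ContinuousLinearMap.fst ℝ ℝ ℝ)).prod
        ((-Real.sqrt 3) • (ContinuousLinearMap.snd ℝ ℝ ℝ)))
      (-(Real.sqrt 3 / 2), 0)) := by
  have h3 : Real.sqrt 3 ^ 2 = 3 := Real.sq_sqrt (by norm_num)
  constructor
  · exact key (Real.sqrt 3 / 2) (Real.sqrt 3) (by nlinarith [h3]) (by ring)
  · have h := key (-(Real.sqrt 3 / 2)) (-Real.sqrt 3) (by nlinarith [h3]) (by ring)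
    rwa [neg_neg] at h
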